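/- Let G be a finite group with subgroups A, B, M satisfying conditions (1)–(4): |A| = |B| = |M| = nk, |G| = n³k with k = |A∩B|, AM and BM are subgroups of order n²k, G = AMB, and AB ∩ BA = A ∪ B. Then G = ABAB, i.e., every element of G is a product of an element of A, an element of B, an element of A, and an element of B. -/

import Mathlib

open scoped Pointwise
open Set

/-- Fiber-counting: if any two factorizations of the same element of `X * Y`
have first coordinates differing (on the left) by an element of `I`, then
`|X| * |Y| ≤ |I| * |X * Y|`. -/
lemma helper_count {G : Type*} [Group G] [Finite G] (X Y I : Set G)
    (h : ∀ x₁ ∈ X, ∀ y₁ ∈ Y, ∀ x₂ ∈ X, ∀ y₂ ∈ Y, x₁ * y₁ = x₂ * y₂ → x₁⁻¹ * x₂ ∈ I) :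
    X.ncard * Y.ncard ≤ I.ncard * (X * Y).ncard := by
  classical
  letI : Fintype G := Fintype.ofFinite G
  have hXf := X.toFinite; have hYf := Y.toFinite
  have hXYf := (X * Y).toFinite; have hIf := I.toFinite
  set sX := hXf.toFinset
  set sY := hYf.toFinset
  set sXY := hXYf.toFinset
  have hcard : (sX ×ˢ sY).card ≤ I.ncard * sXY.card := by
    apply Finset.card_le_mul_card_image_of_maps_to (f := fun p : G × G => p.1 * p.2)
    · rintro ⟨x, y⟩ hp
      simp only [Finset.mem_product, Set.Finite.mem_toFinset, sX, sY] at hp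
      simp only [Set.Finite.mem_toFinset, sXY]
      exact Set.mul_mem_mul hp.1 hp.2
    · intro z hz
      set F := Finset.filter (fun p : G × G => p.1 * p.2 = z) (sX ×ˢ sY) with hF
      rcases F.eq_empty_or_nonempty with he | ⟨p₀, hp₀⟩
      · simp [he]
      · have hp₀' := hp₀
        simp only [hF, Finset.mem_filter, Finset.mem_product, Set.Finite.mem_toFinset, sX, sY]
          at hp₀'
        have : F.card ≤ hIf.toFinset.card := by
          apply Finset.card_le_card_of_injOn (fun p => p₀.1⁻¹ * p.1)
          · rintro p (hp : p ∈ F)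
            simp only [hF, Finset.mem_filter, Finset.mem_product, Set.Finite.mem_toFinset,
              sX, sY] at hp
            simp only [Finset.mem_coe, Set.Finite.mem_toFinset]
            exact h p₀.1 hp₀'.1.1 p₀.2 hp₀'.1.2 p.1 hp.1.1 p.2 hp.1.2
              (hp₀'.2.trans hp.2.symm)
          · intro p hp q hq hpq
            rw [Finset.mem_coe] at hp hq
            simp only [hF, Finset.mem_filter, Finset.mem_product] at hp hq
            have h1 : p.1 = q.1 := by
              have := mul_left_cancel hpq
              exact this
            have h2 : p.2 = q.2 := by
              have := hp.2.trans hq.2.symm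
              rw [h1] at this
              exact mul_left_cancel this
            exact Prod.ext h1 h2
        calc F.card ≤ hIf.toFinset.card := this
          _ = I.ncard := (Set.ncard_eq_toFinset_card I hIf).symm
  calc X.ncard * Y.ncard = sX.card * sY.card := by
        rw [Set.ncard_eq_toFinset_card X hXf, Set.ncard_eq_toFinset_card Y hYf]
    _ = (sX ×ˢ sY).card := (Finset.card_product sX sY).symm
    _ ≤ I.ncard * sXY.card := hcard
    _ = I.ncard * (X * Y).ncard := by rw [Set.ncard_eq_toFinset_card (X * Y) hXYf]

theorem stmt3 {G : Type*} [Group G] [Finite G]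
    (A B M AM BM : Subgroup G) (n k : ℕ) (hn : 1 < n)
    (hk : k = Nat.card (A ⊓ B : Subgroup G))
    (hA : Nat.card A = n * k) (hB : Nat.card B = n * k) (hM : Nat.card M = n * k)
    (hG : Nat.card G = n ^ 3 * k)
    (hAM : (AM : Set G) = (A : Set G) * (M : Set G))
    (hBM : (BM : Set G) = (B : Set G) * (M : Set G))
    (hAMcard : Nat.card AM = n ^ 2 * k) (hBMcard : Nat.card BM = n ^ 2 * k)
    (h3 : ∀ g : G, ∃ a ∈ A, ∃ m ∈ M, ∃ b ∈ B, g = a * m * b)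
    (h4 : ((A : Set G) * (B : Set G)) ∩ ((B : Set G) * (A : Set G)) =
      (A : Set G) ∪ (B : Set G)) :
    ∀ g : G, ∃ a₁ ∈ A, ∃ b₁ ∈ B, ∃ a₂ ∈ A, ∃ b₂ ∈ B, g = a₁ * b₁ * a₂ * b₂ := by
  intro g
  by_contra hcon
  push_neg at hcon
  -- notation
  set SA : Set G := (A : Set G) with hSA
  set SB : Set G := (B : Set G) with hSB
  set I : Set G := SA ∩ SB with hI
  set S : Set G := SA * SB with hS
  set W : Set G := S \ SB with hW
  set T : Set G := SB * W with hT
  have hk0 : 0 < k := by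
    rw [hk]; exact Nat.card_pos
  -- cardinalities of basic sets
  have hIcard : I.ncard = k := by
    rw [hk, ← Nat.card_coe_set_eq]
    congr 1
  have hSAcard : SA.ncard = n * k := by rw [← Nat.card_coe_set_eq, ← hA]; rfl
  have hSBcard : SB.ncard = n * k := by rw [← Nat.card_coe_set_eq, ← hB]; rfl
  -- |S| ≥ n² k
  have hScount : SA.ncard * SB.ncard ≤ I.ncard * S.ncard := by
    apply helper_count
    intro x₁ hx₁ y₁ hy₁ x₂ hx₂ y₂ hy₂ heq
    constructor
    · exact mul_mem (inv_mem hx₁) hx₂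
    · have : x₁⁻¹ * x₂ = y₁ * y₂⁻¹ := by
        have h2 : x₁⁻¹ * (x₁ * y₁) * y₂⁻¹ = y₁ * y₂⁻¹ := by group
        rw [heq] at h2
        rw [← h2]; group
      rw [this]; exact mul_mem hy₁ (inv_mem hy₂)
  have hS_lb : n * n * k ≤ S.ncard := by
    rw [hSAcard, hSBcard, hIcard] at hScount
    have : k * (n * n * k) ≤ k * S.ncard := by
      calc k * (n * n * k) = (n * k) * (n * k) := by ring
        _ ≤ k * S.ncard := hScount
    exact Nat.le_of_mul_le_mul_left this hk0
  -- B ⊆ S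
  have hBS : SB ⊆ S := by
    intro b hb
    exact ⟨1, one_mem A, b, hb, one_mul b⟩
  -- key lemma L1 from condition (4)
  have hL1 : ∀ c₁ ∈ SB, ∀ w₁ ∈ W, ∀ c₂ ∈ SB, ∀ w₂ ∈ W, c₁ * w₁ = c₂ * w₂ →
      c₁⁻¹ * c₂ ∈ I := by
    intro c₁ hc₁ w₁ hw₁ c₂ hc₂ w₂ hw₂ heq
    have hy : c₁⁻¹ * c₂ ∈ SB := mul_mem (inv_mem hc₁) hc₂
    obtain ⟨hw₁S, hw₁B⟩ := hw₁
    obtain ⟨hw₂S, hw₂B⟩ := hw₂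
    obtain ⟨a, ha, b, hb, hab⟩ := hw₁S
    obtain ⟨a', ha', b', hb', hab'⟩ := hw₂S
    replace hab : a * b = w₁ := hab
    replace hab' : a' * b' = w₂ := hab'
    set y := c₁⁻¹ * c₂ with hy'
    have hwy : w₁ = y * w₂ := by
      rw [hy']
      rw [mul_assoc, ← heq]
      group
    set z := y * a' with hz
    have hzBA : z ∈ SB * SA := Set.mul_mem_mul hy ha'
    have hzAB : z ∈ SA * SB := by
      have : z = a * (b * b'⁻¹) := by
        have h1 : a * b = y * (a' * b') := by rw [hab, hab']; exact hwy
        have : a * b * b'⁻¹ = y * a' := by rw [h1]; group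
        rw [hz, ← this]; group
      rw [this]
      exact Set.mul_mem_mul ha (mul_mem hb (inv_mem hb'))
    have hzU : z ∈ SA ∪ SB := by
      rw [← h4]; exact ⟨hzAB, hzBA⟩
    rcases hzU with hzA | hzB
    · have : y ∈ SA := by
        have : y = z * a'⁻¹ := by rw [hz]; group
        rw [this]; exact mul_mem hzA (inv_mem ha')
      exact ⟨this, hy⟩
    · exfalso
      apply hw₁B
      have hab2 : a ∈ SB := by
        have : a = z * b' * b⁻¹ := by
          have h1 : a * b = y * (a' * b') := by rw [hab, hab']; exact hwy
          have : a * b = z * b' := by rw [hz, h1]; group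
          rw [← this]; group
        rw [this]
        exact mul_mem (mul_mem hzB hb') (inv_mem hb)
      rw [← hab]
      exact mul_mem hab2 hb
  -- |T| ≥ n * |W|
  have hTcount : SB.ncard * W.ncard ≤ I.ncard * T.ncard := helper_count SB W I hL1
  -- disjointness: B and T
  have hdBT : Disjoint SB T := by
    rw [Set.disjoint_left]
    rintro z hzB ⟨c, hc, w, hw, rfl⟩
    exact hw.2 (by
      have : w = c⁻¹ * (c * w) := by group
      rw [this]
      exact mul_mem (inv_mem hc) hzB)
  -- disjointness: S and g • (SB ∪ T)
  have hdisj : Disjoint S (g • (SB ∪ T)) := by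
    rw [Set.disjoint_left]
    rintro z ⟨a, ha, b, hb, rfl⟩ hz
    obtain ⟨u, hu, hu'⟩ := hz
    rcases hu with huB | huT
    · -- a * b = g * u, u ∈ B
      replace hu' : g * u = a * b := hu'
      apply hcon a ha b hb 1 (one_mem A) u⁻¹ (inv_mem huB)
      rw [← hu']; group
    · obtain ⟨c, hc, w, hw, rfl⟩ := huT
      obtain ⟨a', ha', b', hb', hab'⟩ := hw.1
      replace hab' : a' * b' = w := hab'
      replace hu' : g * (c * w) = a * b := hu'
      apply hcon a ha (b * b'⁻¹) (mul_mem hb (inv_mem hb')) a'⁻¹ (inv_mem ha')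
        c⁻¹ (inv_mem hc)
      have h3 : g = a * b * (c * w)⁻¹ := by rw [← hu']; group
      rw [h3, ← hab']; group
  -- final counting
  have hfin : Set.Finite (g • (SB ∪ T)) := Set.toFinite _
  have huniv : (S ∪ g • (SB ∪ T)).ncard ≤ n ^ 3 * k := by
    rw [← hG, ← Set.ncard_univ]
    exact Set.ncard_le_ncard (Set.subset_univ _) (Set.toFinite _)
  rw [Set.ncard_union_eq hdisj (Set.toFinite _) (Set.toFinite _)] at huniv
  rw [Set.ncard_smul_set, Set.ncard_union_eq hdBT (Set.toFinite _) (Set.toFinite _)] at huniv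
  -- S.ncard = W.ncard + n*k
  have hSW : W.ncard + n * k = S.ncard := by
    rw [hW, ← hSBcard]
    exact Set.ncard_diff_add_ncard_of_subset hBS (Set.toFinite _)
  have hT_lb : n * W.ncard ≤ T.ncard := by
    rw [hSBcard, hIcard] at hTcount
    have : k * (n * W.ncard) ≤ k * T.ncard := by
      calc k * (n * W.ncard) = n * k * W.ncard := by ring
        _ ≤ k * T.ncard := hTcount
    exact Nat.le_of_mul_le_mul_left this hk0
  -- assemble
  have h1 : W.ncard + n * k ≥ n * n * k := hSW ▸ hS_lb
  have hn3 : n ^ 3 * k = n * (n * (n * k)) := by ring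
  nlinarith [huniv, h1, hT_lb, hSW, hk0, hn]
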